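/- Let H be a complex Hilbert space and X_1,...,X_n bounded self-adjoint operators on H satisfying the algebraic structure X_j X_k = α_{jk}·1 + Σ_{ℓ=1}^n β_{jkℓ} X_ℓ for all j,k, where α ∈ ℂ^{n×n} is Hermitian (α* = α) and each section β_ℓ := (β_{jkℓ})_{1≤j,k≤n} ∈ ℂ^{n×n} is Hermitian (β_ℓ* = β_ℓ). Let τ_k := Tr β_k (a real number) for k=1,...,n and γ := sqrt( Tr α + (1/4) Σ_{k=1}^n τ_k² ). Then the operator norm of each system variable satisfies ‖X_k‖ ≤ |τ_k|/2 + γ for every k = 1,...,n. -/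

import Mathlib

/-- **Norm bounds on the system variables (Theorem 2.2).**
If bounded self-adjoint operators `X 1, ..., X n` on a complex Hilbert space satisfy the
algebraic structure `X j * X k = α j k • 1 + ∑ ℓ, β j k ℓ • X ℓ` with `α` Hermitian and
Hermitian sections `β_ℓ`, then with `τ k = Tr β_k` (a real number) and
`γ = sqrt (Tr α + (1/4) * ∑ k, (τ k)²)`, the operator norm of each `X k` is at most
`|τ k|/2 + γ`. -/
theorem norm_bound_of_algebraic_structure
    {H : Type*} [NormedAddCommGroup H] [InnerProductSpace ℂ H] [CompleteSpace H]
    {n : ℕ} (X : Fin n → H →L[ℂ] H)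
    (α : Fin n → Fin n → ℂ) (β : Fin n → Fin n → Fin n → ℂ)
    (hsa : ∀ k, IsSelfAdjoint (X k))
    (hstruct : ∀ j k, X j * X k = α j k • (1 : H →L[ℂ] H) + ∑ ℓ, β j k ℓ • X ℓ)
    (hα : ∀ j k, starRingEnd ℂ (α j k) = α k j)
    (hβ : ∀ j k ℓ, starRingEnd ℂ (β j k ℓ) = β k j ℓ)
    (τ : Fin n → ℝ) (hτ : ∀ k, (τ k : ℂ) = ∑ j, β j j k)
    (γ : ℝ) (hγ : γ = Real.sqrt ((∑ j, α j j).re + (1 / 4) * ∑ k, (τ k) ^ 2)) :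
    ∀ k, ‖X k‖ ≤ |τ k| / 2 + γ := by
  intro k
  set a : ℝ := (∑ j, α j j).re with ha
  set c : ℝ := a + (1 / 4) * ∑ k, (τ k) ^ 2 with hc
  have hαreal : (∑ j, α j j : ℂ) = (a : ℂ) := by
    have hsum : starRingEnd ℂ (∑ j, α j j) = ∑ j, α j j := by
      simp only [map_sum]
      exact Finset.sum_congr rfl fun j _ => hα j j
    exact (Complex.conj_eq_iff_re.mp hsum).symm
  set Y : Fin n → H →L[ℂ] H := fun ℓ => X ℓ - ((τ ℓ : ℂ) / 2) • 1 with hY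
  have hYsa : ∀ ℓ, IsSelfAdjoint (Y ℓ) := by
    intro ℓ
    have h1 : IsSelfAdjoint (((τ ℓ : ℂ) / 2) • (1 : H →L[ℂ] H)) := by
      rw [IsSelfAdjoint, star_smul, star_one]
      congr 1
      simp [Complex.conj_ofReal]
    exact (hsa ℓ).sub h1
  -- expand each square
  have hsq : ∀ ℓ, Y ℓ * Y ℓ
      = α ℓ ℓ • (1 : H →L[ℂ] H) + (∑ j, β ℓ ℓ j • X j)
        - (τ ℓ : ℂ) • X ℓ + (((τ ℓ : ℂ) / 2) * ((τ ℓ : ℂ) / 2)) • 1 := by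
    intro ℓ
    have : Y ℓ * Y ℓ = X ℓ * X ℓ - (τ ℓ : ℂ) • X ℓ
        + (((τ ℓ : ℂ) / 2) * ((τ ℓ : ℂ) / 2)) • 1 := by
      simp only [hY, sub_mul, mul_sub, smul_mul_assoc, mul_smul_comm, one_mul, mul_one,
        smul_smul]
      module
    rw [this, hstruct ℓ ℓ]
  have hsumY : ∑ ℓ, Y ℓ * Y ℓ = (c : ℂ) • (1 : H →L[ℂ] H) := by
    have hswap : ∑ ℓ, ∑ j, β ℓ ℓ j • X j = ∑ ℓ, (τ ℓ : ℂ) • X ℓ := by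
      rw [Finset.sum_comm]
      exact Finset.sum_congr rfl fun j _ => by rw [← Finset.sum_smul, ← hτ j]
    calc ∑ ℓ, Y ℓ * Y ℓ
        = ∑ ℓ, (α ℓ ℓ • (1 : H →L[ℂ] H) + (∑ j, β ℓ ℓ j • X j)
            - (τ ℓ : ℂ) • X ℓ + (((τ ℓ : ℂ) / 2) * ((τ ℓ : ℂ) / 2)) • 1) :=
          Finset.sum_congr rfl fun ℓ _ => hsq ℓ
      _ = (∑ ℓ, α ℓ ℓ) • 1 + ((∑ ℓ, ∑ j, β ℓ ℓ j • X j) - ∑ ℓ, (τ ℓ : ℂ) • X ℓ)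
            + (∑ ℓ, ((τ ℓ : ℂ) / 2) * ((τ ℓ : ℂ) / 2)) • 1 := by
          simp only [Finset.sum_add_distrib, Finset.sum_sub_distrib, Finset.sum_smul]
          abel
      _ = (c : ℂ) • 1 := by
          rw [hswap, sub_self, add_zero, hαreal, ← add_smul]
          congr 1
          push_cast [hc]
          rw [Finset.mul_sum]
          congr 1
          exact Finset.sum_congr rfl fun ℓ _ => by push_cast; ring
  -- pointwise estimate
  have key : ∀ x : H, ‖Y k x‖ ^ 2 ≤ c * ‖x‖ ^ 2 := by
    intro x
    have hterm : ∀ ℓ, (inner ℂ ((Y ℓ * Y ℓ) x) x : ℂ).re = ‖Y ℓ x‖ ^ 2 := by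
      intro ℓ
      have : ((Y ℓ * Y ℓ) x) = Y ℓ (Y ℓ x) := rfl
      rw [this]
      have hadj : ContinuousLinearMap.adjoint (Y ℓ) = Y ℓ :=
        ContinuousLinearMap.isSelfAdjoint_iff'.mp (hYsa ℓ)
      have h3 : (inner ℂ ((Y ℓ) ((Y ℓ) x)) x : ℂ) = inner ℂ ((Y ℓ) x) ((Y ℓ) x) := by
        rw [← ContinuousLinearMap.adjoint_inner_left (Y ℓ) x ((Y ℓ) x), hadj]
      rw [h3, @inner_self_eq_norm_sq_to_K ℂ]
      simp [← Complex.ofReal_pow]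
    have hsum : ∑ ℓ, (inner ℂ ((Y ℓ * Y ℓ) x) x : ℂ).re = c * ‖x‖ ^ 2 := by
      have : ∑ ℓ, (inner ℂ ((Y ℓ * Y ℓ) x) x : ℂ) = inner ℂ (((c : ℂ) • (1 : H →L[ℂ] H)) x) x := by
        rw [← hsumY, ContinuousLinearMap.sum_apply, sum_inner]
      have h2 : (∑ ℓ, (inner ℂ ((Y ℓ * Y ℓ) x) x : ℂ)).re = c * ‖x‖ ^ 2 := by
        rw [this]
        simp only [ContinuousLinearMap.smul_apply, ContinuousLinearMap.one_apply,
          inner_smul_left]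
        rw [Complex.conj_ofReal]
        rw [Complex.re_ofReal_mul]
        rw [@inner_self_eq_norm_sq_to_K ℂ]
        simp [← Complex.ofReal_pow]
      rw [← h2, Complex.re_sum]
    calc ‖Y k x‖ ^ 2 = (inner ℂ ((Y k * Y k) x) x : ℂ).re := (hterm k).symm
      _ ≤ ∑ ℓ, (inner ℂ ((Y ℓ * Y ℓ) x) x : ℂ).re :=
          Finset.single_le_sum (f := fun ℓ => (inner ℂ ((Y ℓ * Y ℓ) x) x : ℂ).re)
            (fun ℓ _ => le_of_le_of_eq (sq_nonneg ‖(Y ℓ) x‖) (hterm ℓ).symm)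
            (Finset.mem_univ k)
      _ = c * ‖x‖ ^ 2 := hsum
  have hγc : γ = Real.sqrt c := by rw [hγ, hc, ha]
  have hYnorm : ‖Y k‖ ≤ γ := by
    apply ContinuousLinearMap.opNorm_le_bound _ (hγc ▸ Real.sqrt_nonneg c)
    intro x
    have h1 := key x
    have h2 : ‖Y k x‖ = Real.sqrt (‖Y k x‖ ^ 2) := by
      rw [Real.sqrt_sq (norm_nonneg _)]
    rw [h2, hγc]
    calc Real.sqrt (‖Y k x‖ ^ 2) ≤ Real.sqrt (c * ‖x‖ ^ 2) := Real.sqrt_le_sqrt h1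
      _ = Real.sqrt (‖x‖ ^ 2 * c) := by ring_nf
      _ = ‖x‖ * Real.sqrt c := by
          rw [Real.sqrt_mul (sq_nonneg _), Real.sqrt_sq (norm_nonneg _)]
      _ = Real.sqrt c * ‖x‖ := mul_comm _ _
  have hXk : X k = Y k + ((τ k : ℂ) / 2) • 1 := by rw [hY]; module
  calc ‖X k‖ = ‖Y k + ((τ k : ℂ) / 2) • (1 : H →L[ℂ] H)‖ := by rw [← hXk]
    _ ≤ ‖Y k‖ + ‖((τ k : ℂ) / 2) • (1 : H →L[ℂ] H)‖ := norm_add_le _ _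
    _ ≤ γ + |τ k| / 2 := by
        apply add_le_add hYnorm
        rw [norm_smul]
        calc ‖(τ k : ℂ) / 2‖ * ‖(1 : H →L[ℂ] H)‖ ≤ ‖(τ k : ℂ) / 2‖ * 1 := by
              apply mul_le_mul_of_nonneg_left ContinuousLinearMap.norm_id_le (norm_nonneg _)
          _ = |τ k| / 2 := by
              rw [mul_one]
              simp [norm_div, Complex.norm_real, Real.norm_eq_abs]
    _ = |τ k| / 2 + γ := add_comm _ _
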